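/- Let m ∈ {n−1, n} and let y, w ∈ Área_n. Then ρ_m(y) = ρ_m(w) if and only if { j : 1 ≤ j ≤ m and ℓ(y·t_j) < ℓ(y) } = { j : 1 ≤ j ≤ m and ℓ(w·t_j) < ℓ(w) }. (This is the statement that for b/a > n−2, the intersections of ρ^Ξ with {t_1,…,t_n} already determine ρ^Ξ on Área_n.) -/

import Mathlib

namespace BnPaper

/-- The generator `t`: swaps `1` and `-1`, fixing all other points. -/
def t : Equiv.Perm ℤ := Equiv.swap 1 (-1)

/-- The generator `s i`: swaps `i ↔ i+1` and `-i ↔ -(i+1)`. -/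
def s (i : ℤ) : Equiv.Perm ℤ := Equiv.swap i (i + 1) * Equiv.swap (-i) (-(i + 1))

/-- The descending product `s_j · s_{j-1} ⋯ s_i` (the identity when `i > j`). -/
def desc (i j : ℕ) : Equiv.Perm ℤ :=
  ((List.range (j + 1 - i)).map (fun k => s ((j : ℤ) - (k : ℤ)))).prod

/-- The ascending product `s_i · s_{i+1} ⋯ s_j` (the identity when `i > j`). -/
def asc (i j : ℕ) : Equiv.Perm ℤ :=
  ((List.range (j + 1 - i)).map (fun k => s ((i : ℤ) + (k : ℤ)))).prod

/-- `t_j = s_{j-1} ⋯ s_1 · t · s_1 ⋯ s_{j-1}`. -/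
def tt (j : ℕ) : Equiv.Perm ℤ := desc 1 (j - 1) * t * (desc 1 (j - 1))⁻¹

/-- The Coxeter generating set `{t, s_1, …, s_{n-1}}` of `W_n`. -/
def gens (n : ℕ) : Set (Equiv.Perm ℤ) :=
  insert t {g | ∃ i : ℕ, 1 ≤ i ∧ i ≤ n - 1 ∧ g = s (i : ℤ)}

/-- The Coxeter length: the least number of generators whose product is `w`. -/
noncomputable def len (n : ℕ) (w : Equiv.Perm ℤ) : ℕ :=
  sInf {k | ∃ l : List (Equiv.Perm ℤ), l.length = k ∧ (∀ g ∈ l, g ∈ gens n) ∧ l.prod = w}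

/-- `W_n` realised as the signed permutations of `{-n, …, -1, 1, …, n}`:
permutations of `ℤ` that are odd (`w(-i) = -w(i)`) and fix everything beyond `n` in
absolute value. -/
def W (n : ℕ) : Set (Equiv.Perm ℤ) :=
  {w | (∀ i : ℤ, w (-i) = -(w i)) ∧ ∀ i : ℤ, (n : ℤ) < |i| → w i = i}

/-- The right descent set `Des(w)`. -/
def Des (n : ℕ) (w : Equiv.Perm ℤ) : Set (Equiv.Perm ℤ) :=
  {g | g ∈ gens n ∧ len n (w * g) < len n w}

/-- The enhanced descent-set invariant
`ρ_m(w) = Des(w) ∪ {t_j : 2 ≤ j ≤ m, ℓ(w t_j) < ℓ(w)}`. -/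
def rho (n m : ℕ) (w : Equiv.Perm ℤ) : Set (Equiv.Perm ℤ) :=
  Des n w ∪ {g | ∃ j : ℕ, 2 ≤ j ∧ j ≤ m ∧ g = tt j ∧ len n (w * tt j) < len n w}

/-- `Área_n`: the negative entries of the row form appear in increasing order and
the positive entries in strictly decreasing order. -/
def Area (n : ℕ) : Set (Equiv.Perm ℤ) :=
  {w | w ∈ W n ∧ ∀ i j : ℤ, 1 ≤ i → i < j → j ≤ (n : ℤ) →
    (w i < 0 → w j < 0 → w i < w j) ∧ (0 < w i → 0 < w j → w j < w i)}

/-- The suffix relation `y ≤_e w`: `w = z · y` with `ℓ(w) = ℓ(z) + ℓ(y)`. -/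
def Suf (n : ℕ) (y w : Equiv.Perm ℤ) : Prop :=
  ∃ z, z ∈ W n ∧ w = z * y ∧ len n w = len n z + len n y

/-- `a_q = (t)(s_1 t)(s_2 s_1 t) ⋯ (s_{q-1} ⋯ s_1 t)`. -/
def aw (q : ℕ) : Equiv.Perm ℤ := ((List.range q).map (fun k => desc 1 k * t)).prod

/-- `b_q = (s_{q+1})(s_{q+2} s_{q+1}) ⋯ (s_{n-1} ⋯ s_{q+1})` (identity for `q ≥ n-1`). -/
def bw (n q : ℕ) : Equiv.Perm ℤ :=
  ((List.range (n - 1 - q)).map (fun k => desc (q + 1) (q + 1 + k))).prod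

/-- `σ_{n,q} = a_q · b_q`. -/
def sig (n q : ℕ) : Equiv.Perm ℤ := aw q * bw n q

/-- `p_{n,q} = (s_{n-q} ⋯ s_1)(s_{n-q+1} ⋯ s_2) ⋯ (s_{n-1} ⋯ s_q)`,
with `p_{n,0} = p_{n,n} = e`. -/
def p (n q : ℕ) : Equiv.Perm ℤ :=
  ((List.range q).map (fun m => desc (1 + m) (n - q + m))).prod

/-- `Π_{n,q} = (s_{n-q-1} ⋯ s_1) · t · p_{n,q}`. -/
def PiElt (n q : ℕ) : Equiv.Perm ℤ := desc 1 (n - q - 1) * t * p n q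

/-- `Υ(w) = {z ∈ Área_n : Des(z) = Des(w)}`. -/
def Ups (n : ℕ) (w : Equiv.Perm ℤ) : Set (Equiv.Perm ℤ) :=
  {z | z ∈ Area n ∧ Des n z = Des n w}

/-- The parabolic subgroup `W_J = ⟨s_1, …, s_{n-1}⟩`. -/
def WJ (n : ℕ) : Set (Equiv.Perm ℤ) :=
  ↑(Subgroup.closure {g | ∃ i : ℕ, 1 ≤ i ∧ i ≤ n - 1 ∧ g = s (i : ℤ)})

/-- The parabolic subgroup `W_K = ⟨t, s_1, …, s_{n-2}⟩`. -/
def WK (n : ℕ) : Set (Equiv.Perm ℤ) :=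
  ↑(Subgroup.closure (insert t {g | ∃ i : ℕ, 1 ≤ i ∧ i ≤ n - 2 ∧ g = s (i : ℤ)}))

/-- Knuth relation of type `I_k` : `w' = w · s_{i+1}` when
`w(i+1) < w(i) < w(i+2)` or `w(i+2) < w(i) < w(i+1)`. -/
def stepI (k : ℕ) (w w' : Equiv.Perm ℤ) : Prop :=
  ∃ i : ℤ, 1 ≤ i ∧ i ≤ (k : ℤ) - 2 ∧
    ((w (i + 1) < w i ∧ w i < w (i + 2)) ∨ (w (i + 2) < w i ∧ w i < w (i + 1))) ∧
    w' = w * s (i + 1)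

/-- Knuth relation of type `II_k` : `w' = w · s_i` when
`w(i+1) < w(i+2) < w(i)` or `w(i) < w(i+2) < w(i+1)`. -/
def stepII (k : ℕ) (w w' : Equiv.Perm ℤ) : Prop :=
  ∃ i : ℤ, 1 ≤ i ∧ i ≤ (k : ℤ) - 2 ∧
    ((w (i + 1) < w (i + 2) ∧ w (i + 2) < w i) ∨ (w i < w (i + 2) ∧ w (i + 2) < w (i + 1))) ∧
    w' = w * s i

/-- Knuth relation of type `III_k` : `w' = w · s_i` when `w(i)` and `w(i+1)` have
opposite signs. -/
def stepIII (k : ℕ) (w w' : Equiv.Perm ℤ) : Prop :=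
  ∃ i : ℤ, 1 ≤ i ∧ i ≤ (k : ℤ) - 1 ∧
    ((w i < 0 ∧ 0 < w (i + 1)) ∨ (w (i + 1) < 0 ∧ 0 < w i)) ∧
    w' = w * s i


lemma s_apply (i x : ℤ) (hi : 1 ≤ i) :
    s i x = if x = i then i + 1 else if x = i + 1 then i
      else if x = -i then -(i+1) else if x = -(i+1) then -i else x := by
  simp only [s, Equiv.Perm.mul_apply]
  split_ifs with h1 h2 h3 h4
  · rw [h1]
    have h : Equiv.swap (-i) (-(i+1)) i = i := Equiv.swap_apply_of_ne_of_ne (by omega) (by omega)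
    rw [h, Equiv.swap_apply_left]
  · rw [h2]
    have h : Equiv.swap (-i) (-(i+1)) (i+1) = i+1 :=
      Equiv.swap_apply_of_ne_of_ne (by omega) (by omega)
    rw [h, Equiv.swap_apply_right]
  · rw [h3]
    have h : Equiv.swap (-i) (-(i+1)) (-i) = -(i+1) := Equiv.swap_apply_left _ _
    rw [h, Equiv.swap_apply_of_ne_of_ne (by omega) (by omega)]
  · rw [h4]
    have h : Equiv.swap (-i) (-(i+1)) (-(i+1)) = -i := Equiv.swap_apply_right _ _
    rw [h, Equiv.swap_apply_of_ne_of_ne (by omega) (by omega)]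
  · have h : Equiv.swap (-i) (-(i+1)) x = x := Equiv.swap_apply_of_ne_of_ne h3 h4
    rw [h, Equiv.swap_apply_of_ne_of_ne h1 h2]

lemma s_mem_W (n : ℕ) (i : ℤ) (h1 : 1 ≤ i) (h2 : i + 1 ≤ n) : s i ∈ W n := by
  constructor
  · intro x
    rw [s_apply i x h1, s_apply i (-x) h1]
    split_ifs <;> omega
  · intro x hx
    rcases abs_cases x with ⟨h, _⟩ | ⟨h, _⟩ <;>
    · rw [s_apply i x h1]
      split_ifs <;> omega

lemma swapneg_apply (j x : ℤ) :
    Equiv.swap j (-j) x = if x = j then -j else if x = -j then j else x := by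
  split_ifs with h1 h2 <;> subst_eqs
  · exact Equiv.swap_apply_left _ _
  · exact Equiv.swap_apply_right _ _
  · exact Equiv.swap_apply_of_ne_of_ne h1 h2

lemma swapneg_mem_W (n : ℕ) (j : ℤ) (h1 : 1 ≤ j) (h2 : j ≤ n) : Equiv.swap j (-j) ∈ W n := by
  constructor
  · intro x
    rw [swapneg_apply j x, swapneg_apply j (-x)]
    split_ifs <;> omega
  · intro x hx
    rcases abs_cases x with ⟨h, _⟩ | ⟨h, _⟩ <;>
    · rw [swapneg_apply j x]
      split_ifs <;> omega

lemma W_mul {n : ℕ} {u v : Equiv.Perm ℤ} (hu : u ∈ W n) (hv : v ∈ W n) : u * v ∈ W n := by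
  refine ⟨fun i => ?_, fun i hi => ?_⟩
  · simp only [Equiv.Perm.mul_apply, hv.1, hu.1]
  · simp only [Equiv.Perm.mul_apply, hv.2 i hi, hu.2 i hi]

lemma W_zero {n : ℕ} {w : Equiv.Perm ℤ} (hw : w ∈ W n) : w 0 = 0 := by
  have := hw.1 0; simp at this; omega

lemma W_ne_zero {n : ℕ} {w : Equiv.Perm ℤ} (hw : w ∈ W n) {k : ℤ} (hk : k ≠ 0) : w k ≠ 0 := by
  intro h
  exact hk (w.injective (h.trans (W_zero hw).symm))

lemma W_abs_le {n : ℕ} {w : Equiv.Perm ℤ} (hw : w ∈ W n) {k : ℤ} (hk : |k| ≤ n) : |w k| ≤ n := by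
  by_contra h
  push_neg at h
  have h2 := hw.2 (w k) h
  have h3 := w.injective h2
  rw [h3] at h
  omega

lemma perm_apply_inv_self (f : Equiv.Perm ℤ) (x : ℤ) : f (f⁻¹ x) = x := f.apply_symm_apply x

lemma perm_inv_apply_self (f : Equiv.Perm ℤ) (x : ℤ) : f⁻¹ (f x) = x := f.symm_apply_apply x

lemma W_inv {n : ℕ} {w : Equiv.Perm ℤ} (hw : w ∈ W n) : w⁻¹ ∈ W n := by
  refine ⟨fun i => ?_, fun i hi => ?_⟩
  · apply w.injective
    rw [perm_apply_inv_self, hw.1, perm_apply_inv_self]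
  · apply w.injective
    rw [perm_apply_inv_self]
    exact (hw.2 i hi).symm

noncomputable def II (n : ℕ) : Finset ℤ := Finset.Icc 1 (n : ℤ)

lemma mem_II {n : ℕ} {k : ℤ} : k ∈ II n ↔ 1 ≤ k ∧ k ≤ (n : ℤ) := by
  simp [II, Finset.mem_Icc]

noncomputable def invF (n : ℕ) (w : Equiv.Perm ℤ) : ℕ :=
  ∑ p ∈ II n, ∑ q ∈ II n, if p < q ∧ w q < w p then 1 else 0

noncomputable def negsum (n : ℕ) (w : Equiv.Perm ℤ) : ℕ := ∑ k ∈ II n, (-(w k)).toNat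

noncomputable def stat (n : ℕ) (w : Equiv.Perm ℤ) : ℕ := invF n w + negsum n w

noncomputable def AA (n : ℕ) (w : Equiv.Perm ℤ) (j : ℤ) : ℕ :=
  ∑ p ∈ II n, if p < j ∧ |w p| < |w j| then 1 else 0

lemma sum_ite_eq_of_mem {n : ℕ} {c : ℤ} (hc : c ∈ II n) (f : ℤ → ℕ) :
    ∑ x ∈ II n, (if x = c then f x else 0) = f c := by
  rw [Finset.sum_ite_eq' _ c f, if_pos hc]

lemma sum_ite_push (P : Prop) [Decidable P] (f : ℤ → ℕ) (s : Finset ℤ) :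
    ∑ x ∈ s, (if P then f x else 0) = if P then ∑ x ∈ s, f x else 0 := by
  split_ifs <;> simp

lemma count_abs_lt (n : ℕ) {w : Equiv.Perm ℤ} (hw : w ∈ W n) (a : ℤ) :
    (∑ k ∈ II n, if |w k| < a then (1:ℕ) else 0)
      = ∑ b ∈ II n, if b < a then (1:ℕ) else 0 := by
  have hwi := W_inv hw
  refine Finset.sum_nbij' (fun k => |w k|) (fun b => |w⁻¹ b|) ?_ ?_ ?_ ?_ ?_
  · intro k hk
    rw [mem_II] at hk ⊢
    show 1 ≤ |w k| ∧ |w k| ≤ (n:ℤ)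
    have h1 : w k ≠ 0 := W_ne_zero hw (by omega)
    have h2 : |w k| ≤ n := W_abs_le hw (by rcases abs_cases k with ⟨h,_⟩|⟨h,_⟩ <;> omega)
    rcases abs_cases (w k) with ⟨h,_⟩|⟨h,_⟩ <;> omega
  · intro b hb
    rw [mem_II] at hb ⊢
    show 1 ≤ |w⁻¹ b| ∧ |w⁻¹ b| ≤ (n:ℤ)
    have h1 : w⁻¹ b ≠ 0 := W_ne_zero hwi (by omega)
    have h2 : |w⁻¹ b| ≤ n := W_abs_le hwi (by rcases abs_cases b with ⟨h,_⟩|⟨h,_⟩ <;> omega)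
    rcases abs_cases (w⁻¹ b) with ⟨h,_⟩|⟨h,_⟩ <;> omega
  · intro k hk
    rw [mem_II] at hk
    show |w⁻¹ (|w k|)| = k
    rcases abs_cases (w k) with ⟨h,_⟩|⟨h,_⟩
    · rw [h, perm_inv_apply_self]
      rcases abs_cases k with ⟨h2,_⟩|⟨h2,_⟩ <;> omega
    · rw [h]
      have : w⁻¹ (-(w k)) = -(w⁻¹ (w k)) := hwi.1 (w k)
      rw [this, perm_inv_apply_self]
      rcases abs_cases (-k) with ⟨h2,_⟩|⟨h2,_⟩ <;> omega
  · intro b hb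
    rw [mem_II] at hb
    show |w (|w⁻¹ b|)| = b
    rcases abs_cases (w⁻¹ b) with ⟨h,_⟩|⟨h,_⟩
    · rw [h, perm_apply_inv_self]
      rcases abs_cases b with ⟨h2,_⟩|⟨h2,_⟩ <;> omega
    · rw [h]
      have : w (-(w⁻¹ b)) = -(w (w⁻¹ b)) := hw.1 (w⁻¹ b)
      rw [this, perm_apply_inv_self]
      rcases abs_cases (-b) with ⟨h2,_⟩|⟨h2,_⟩ <;> omega
  · intro k _
    rfl

lemma count_lt (n : ℕ) (a : ℤ) (h2 : a ≤ (n:ℤ)) :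
    (∑ b ∈ II n, if b < a then (1:ℕ) else 0) = (a - 1).toNat := by
  rw [← Finset.card_filter]
  have h : Finset.filter (fun b => b < a) (II n) = Finset.Icc 1 (a-1) := by
    ext b
    simp only [Finset.mem_filter, mem_II, Finset.mem_Icc]
    omega
  rw [h, Int.card_Icc]
  congr 1
  omega

lemma stat_mul_swapneg (n : ℕ) {w : Equiv.Perm ℤ} (hw : w ∈ W n) (j : ℤ)
    (hj1 : 1 ≤ j) (hjn : j ≤ (n:ℤ)) (ha : 0 < w j) :
    stat n (w * Equiv.swap j (-j)) = stat n w + 1 + 2 * AA n w j := by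
  set u := w * Equiv.swap j (-j) with hu
  have hmem : j ∈ II n := mem_II.mpr ⟨hj1, hjn⟩
  have heval : ∀ k : ℤ, 1 ≤ k → k ≠ j → u k = w k := by
    intro k hk hkj
    rw [hu, Equiv.Perm.mul_apply, swapneg_apply, if_neg hkj, if_neg (by omega)]
  have hevalj : u j = -(w j) := by
    rw [hu, Equiv.Perm.mul_apply, swapneg_apply, if_pos rfl, hw.1]
  have hqnej : ∀ q : ℤ, 1 ≤ q → q ≠ j → w q ≠ w j ∧ w q ≠ -(w j) := by
    intro q hq hqj
    constructor
    · intro h; exact hqj (w.injective h)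
    · intro h
      have h2 : w q = w (-j) := by rw [hw.1]; omega
      have := w.injective h2
      omega
  -- negsum
  have hneg : negsum n u = negsum n w + (w j).toNat := by
    unfold negsum
    have hpt : ∀ k ∈ II n, (-(u k)).toNat = (-(w k)).toNat + (if k = j then (w j).toNat else 0) := by
      intro k hk
      rw [mem_II] at hk
      by_cases hkj : k = j
      · rw [hkj, hevalj, if_pos rfl]
        omega
      · rw [heval k hk.1 hkj, if_neg hkj, add_zero]
    rw [Finset.sum_congr rfl hpt, Finset.sum_add_distrib,
      sum_ite_eq_of_mem hmem (fun _ => (w j).toNat)]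
  -- invF
  have hkey : ∀ p ∈ II n, ∀ q ∈ II n,
      (if p < q ∧ u q < u p then (1:ℕ) else 0)
        + (if p = j then (if p < q ∧ |w q| < |w j| then (1:ℕ) else 0) else 0)
      = (if p < q ∧ w q < w p then (1:ℕ) else 0)
        + (if q = j then (if p < q ∧ |w p| < |w j| then (1:ℕ) else 0) else 0) := by
    intro p hp q hq
    rw [mem_II] at hp hq
    rcases abs_cases (w j) with ⟨haj,_⟩|⟨haj,_⟩
    · by_cases hpj : p = j <;> by_cases hqj : q = j
      · rw [hpj, hqj]
        simp
      · -- p = j, q ≠ j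
        obtain ⟨hne1, hne2⟩ := hqnej q hq.1 hqj
        rw [hpj, hevalj, heval q hq.1 hqj, if_pos rfl, if_neg hqj]
        rcases abs_cases (w q) with ⟨h,_⟩|⟨h,_⟩ <;> split_ifs <;> omega
      · -- q = j, p ≠ j
        obtain ⟨hne1, hne2⟩ := hqnej p hp.1 hpj
        rw [hqj, hevalj, heval p hp.1 hpj, if_pos rfl, if_neg hpj]
        rcases abs_cases (w p) with ⟨h,_⟩|⟨h,_⟩ <;> split_ifs <;> omega
      · rw [heval p hp.1 hpj, heval q hq.1 hqj, if_neg hpj, if_neg hqj]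
    · omega
  have hAR : invF n u + (∑ q ∈ II n, if j < q ∧ |w q| < |w j| then (1:ℕ) else 0)
      = invF n w + AA n w j := by
    unfold invF AA
    have h2 : (∑ p ∈ II n, ∑ q ∈ II n,
        ((if p < q ∧ u q < u p then (1:ℕ) else 0)
          + (if p = j then (if p < q ∧ |w q| < |w j| then (1:ℕ) else 0) else 0)))
        = ∑ p ∈ II n, ∑ q ∈ II n,
        ((if p < q ∧ w q < w p then (1:ℕ) else 0)
          + (if q = j then (if p < q ∧ |w p| < |w j| then (1:ℕ) else 0) else 0)) := by
      refine Finset.sum_congr rfl fun p hp => ?_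
      refine Finset.sum_congr rfl fun q hq => ?_
      exact hkey p hp q hq
    simp only [Finset.sum_add_distrib] at h2
    rw [Finset.sum_congr rfl (fun p (hp : p ∈ II n) =>
        sum_ite_push (p = j) (fun q => if p < q ∧ |w q| < |w j| then (1:ℕ) else 0) (II n))] at h2
    rw [sum_ite_eq_of_mem hmem (fun p => ∑ q ∈ II n, if p < q ∧ |w q| < |w j| then (1:ℕ) else 0)] at h2
    rw [Finset.sum_congr rfl (fun p (hp : p ∈ II n) =>
        sum_ite_eq_of_mem hmem (fun q => if p < q ∧ |w p| < |w j| then (1:ℕ) else 0))] at h2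
    exact h2
  have hcount : AA n w j + (∑ q ∈ II n, if j < q ∧ |w q| < |w j| then (1:ℕ) else 0)
      = (|w j| - 1).toNat := by
    unfold AA
    rw [← Finset.sum_add_distrib]
    have hpt : ∀ k ∈ II n, ((if k < j ∧ |w k| < |w j| then (1:ℕ) else 0)
        + (if j < k ∧ |w k| < |w j| then (1:ℕ) else 0))
        = if |w k| < |w j| then (1:ℕ) else 0 := by
      intro k hk
      rw [mem_II] at hk
      by_cases hkj : k = j
      · rw [hkj]
        simp
      · split_ifs <;> omega
    rw [Finset.sum_congr rfl hpt, count_abs_lt n hw, count_lt n _ (W_abs_le hw (by rcases abs_cases j with ⟨h,_⟩|⟨h,_⟩ <;> omega))]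
  have habsj : |w j| = w j := abs_of_pos ha
  have hs : stat n u = invF n u + negsum n u := rfl
  have hs2 : stat n w = invF n w + negsum n w := rfl
  omega

lemma AA_one (n : ℕ) (w : Equiv.Perm ℤ) : AA n w 1 = 0 := by
  unfold AA
  refine Finset.sum_eq_zero fun p hp => ?_
  rw [mem_II] at hp
  rw [if_neg (by omega)]


lemma stat_mul_s (n : ℕ) {w : Equiv.Perm ℤ} (hw : w ∈ W n) (i : ℤ)
    (h1 : 1 ≤ i) (h2 : i + 1 ≤ (n:ℤ)) :
    stat n (w * s i) + (if w (i+1) < w i then (1:ℕ) else 0)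
      = stat n w + (if w i < w (i+1) then (1:ℕ) else 0) := by
  set σ : Equiv.Perm ℤ := Equiv.swap i (i+1) with hσdef
  set u := w * s i with hu
  have hσ : ∀ k : ℤ, σ k = if k = i then i+1 else if k = i+1 then i else k := by
    intro k
    rw [hσdef, Equiv.swap_apply_def]
  have hσσ : ∀ k : ℤ, σ (σ k) = k := by
    intro k
    rw [hσdef]
    exact Equiv.swap_apply_self _ _ _
  have heval : ∀ k : ℤ, 1 ≤ k → u k = w (σ k) := by
    intro k hk
    rw [hu, Equiv.Perm.mul_apply, s_apply i k h1, hσ k]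
    congr 1
    split_ifs <;> omega
  have hσmem : ∀ k ∈ II n, σ k ∈ II n := by
    intro k hk
    rw [mem_II] at hk ⊢
    rw [hσ k]
    split_ifs <;> omega
  have hmi : i ∈ II n := mem_II.mpr ⟨h1, by omega⟩
  have hmi1 : (i+1) ∈ II n := mem_II.mpr ⟨by omega, h2⟩
  -- negsum is unchanged
  have hneg : negsum n u = negsum n w := by
    unfold negsum
    refine Finset.sum_nbij' (fun k => σ k) (fun k => σ k) hσmem hσmem
      (fun k _ => hσσ k) (fun k _ => hσσ k) ?_
    intro k hk
    rw [mem_II] at hk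
    show (-(u k)).toNat = (-(w (σ k))).toNat
    rw [heval k hk.1]
  -- invF rewritten via σ
  have hinner : ∀ p ∈ II n, (∑ q ∈ II n, if p < q ∧ w (σ q) < w (σ p) then (1:ℕ) else 0)
      = ∑ q ∈ II n, if p < σ q ∧ w q < w (σ p) then (1:ℕ) else 0 := by
    intro p _
    refine Finset.sum_nbij' (fun k => σ k) (fun k => σ k) hσmem hσmem
      (fun k _ => hσσ k) (fun k _ => hσσ k) ?_
    intro q _
    show _ = if p < σ (σ q) ∧ w (σ q) < w (σ p) then (1:ℕ) else 0
    rw [hσσ q]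
  have hstep1 : invF n u = ∑ p ∈ II n, ∑ q ∈ II n,
      if σ p < σ q ∧ w q < w p then (1:ℕ) else 0 := by
    unfold invF
    have e1 : ∀ p ∈ II n, (∑ q ∈ II n, if p < q ∧ u q < u p then (1:ℕ) else 0)
        = ∑ q ∈ II n, if p < q ∧ w (σ q) < w (σ p) then (1:ℕ) else 0 := by
      intro p hp
      refine Finset.sum_congr rfl fun q hq => ?_
      rw [mem_II] at hp hq
      rw [heval q hq.1, heval p hp.1]
    rw [Finset.sum_congr rfl e1, Finset.sum_congr rfl hinner]
    refine Finset.sum_nbij' (fun k => σ k) (fun k => σ k) hσmem hσmem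
      (fun k _ => hσσ k) (fun k _ => hσσ k) ?_
    intro p _
    show _ = ∑ q ∈ II n, if σ (σ p) < σ q ∧ w q < w (σ p) then (1:ℕ) else 0
    refine Finset.sum_congr rfl fun q _ => ?_
    rw [hσσ p]
  -- pointwise comparison
  have hkey : ∀ p ∈ II n, ∀ q ∈ II n,
      (if σ p < σ q ∧ w q < w p then (1:ℕ) else 0)
        + (if p = i then (if q = i+1 then (if w (i+1) < w i then (1:ℕ) else 0) else 0) else 0)
      = (if p < q ∧ w q < w p then (1:ℕ) else 0)
        + (if p = i+1 then (if q = i then (if w i < w (i+1) then (1:ℕ) else 0) else 0) else 0) := by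
    intro p _ q _
    have hw1 : w i ≠ w (i+1) := fun h => by have := w.injective h; omega
    rcases eq_or_ne p i with rfl|hpi
    · rcases eq_or_ne q p with rfl|hq1
      · simp only [hσ]
        split_ifs <;> omega
      · rcases eq_or_ne q (p+1) with rfl|hq2
        · simp only [hσ]
          split_ifs <;> omega
        · simp only [hσ]
          split_ifs <;> omega
    · rcases eq_or_ne p (i+1) with rfl|hpi1
      · rcases eq_or_ne q i with rfl|hq1
        · simp only [hσ]
          split_ifs <;> omega
        · rcases eq_or_ne q (i+1) with rfl|hq2
          · simp only [hσ]
            split_ifs <;> omega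
          · simp only [hσ]
            split_ifs <;> omega
      · rcases eq_or_ne q i with rfl|hq1
        · simp only [hσ]
          split_ifs <;> omega
        · rcases eq_or_ne q (i+1) with rfl|hq2
          · simp only [hσ]
            split_ifs <;> omega
          · simp only [hσ]
            split_ifs <;> omega
  have hinv : invF n u + (if w (i+1) < w i then (1:ℕ) else 0)
      = invF n w + (if w i < w (i+1) then (1:ℕ) else 0) := by
    have h3 : (∑ p ∈ II n, ∑ q ∈ II n,
        ((if σ p < σ q ∧ w q < w p then (1:ℕ) else 0)
          + (if p = i then (if q = i+1 then (if w (i+1) < w i then (1:ℕ) else 0) else 0) else 0)))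
        = ∑ p ∈ II n, ∑ q ∈ II n,
        ((if p < q ∧ w q < w p then (1:ℕ) else 0)
          + (if p = i+1 then (if q = i then (if w i < w (i+1) then (1:ℕ) else 0) else 0) else 0)) := by
      refine Finset.sum_congr rfl fun p hp => ?_
      refine Finset.sum_congr rfl fun q hq => ?_
      exact hkey p hp q hq
    simp only [Finset.sum_add_distrib] at h3
    rw [Finset.sum_congr rfl (fun p (hp : p ∈ II n) =>
      sum_ite_push (p = i) (fun q => if q = i+1 then (if w (i+1) < w i then (1:ℕ) else 0) else 0)
        (II n))] at h3
    rw [sum_ite_eq_of_mem hmi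
      (fun p => ∑ q ∈ II n, if q = i+1 then (if w (i+1) < w i then (1:ℕ) else 0) else 0)] at h3
    rw [Finset.sum_congr rfl (fun p (hp : p ∈ II n) =>
      sum_ite_push (p = i+1) (fun q => if q = i then (if w i < w (i+1) then (1:ℕ) else 0) else 0)
        (II n))] at h3
    rw [sum_ite_eq_of_mem hmi1
      (fun p => ∑ q ∈ II n, if q = i then (if w i < w (i+1) then (1:ℕ) else 0) else 0)] at h3
    rw [sum_ite_eq_of_mem hmi1 (fun _ => if w (i+1) < w i then (1:ℕ) else 0)] at h3
    rw [sum_ite_eq_of_mem hmi (fun _ => if w i < w (i+1) then (1:ℕ) else 0)] at h3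
    rw [hstep1]
    have hinvw : invF n w = ∑ p ∈ II n, ∑ q ∈ II n, if p < q ∧ w q < w p then (1:ℕ) else 0 := rfl
    omega
  have hs : stat n u = invF n u + negsum n u := rfl
  have hs2 : stat n w = invF n w + negsum n w := rfl
  omega


lemma one_mem_W (n : ℕ) : (1 : Equiv.Perm ℤ) ∈ W n := ⟨fun i => rfl, fun i _ => rfl⟩

lemma stat_one (n : ℕ) : stat n 1 = 0 := by
  have h1 : invF n 1 = 0 := by
    refine Finset.sum_eq_zero fun p hp => Finset.sum_eq_zero fun q hq => ?_
    rw [if_neg]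
    rintro ⟨hh1, hh2⟩
    simp only [Equiv.Perm.one_apply] at hh2
    omega
  have h2 : negsum n 1 = 0 := by
    refine Finset.sum_eq_zero fun k hk => ?_
    rw [mem_II] at hk
    simp only [Equiv.Perm.one_apply]
    omega
  unfold stat
  omega

lemma t_mem_W {n : ℕ} (hn : 1 ≤ n) : t ∈ W n := by
  have h : t = Equiv.swap 1 (-1) := rfl
  rw [h]
  exact swapneg_mem_W n 1 le_rfl (by exact_mod_cast hn)

lemma gens_subset_W {n : ℕ} (hn : 1 ≤ n) {g : Equiv.Perm ℤ} (hg : g ∈ gens n) : g ∈ W n := by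
  rcases hg with hg | ⟨i, hi1, hi2, rfl⟩
  · rw [hg]; exact t_mem_W hn
  · refine s_mem_W n i (by exact_mod_cast hi1) ?_
    have : i + 1 ≤ n := by omega
    exact_mod_cast this

lemma stat_step {n : ℕ} {v g : Equiv.Perm ℤ} (hn : 1 ≤ n) (hv : v ∈ W n) (hg : g ∈ gens n) :
    v * g ∈ W n ∧ (stat n (v * g) + 1 = stat n v ∨ stat n (v * g) = stat n v + 1) := by
  refine ⟨W_mul hv (gens_subset_W hn hg), ?_⟩
  rcases hg with hg | ⟨i, hi1, hi2, rfl⟩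
  · -- g = t
    rw [hg]
    have ht : t = Equiv.swap 1 (-1) := rfl
    have hne : v 1 ≠ 0 := W_ne_zero hv one_ne_zero
    rcases lt_trichotomy (v 1) 0 with h | h | h
    · left
      have hmem : v * t ∈ W n := W_mul hv (t_mem_W hn)
      have heq : (v * t) * t = v := by
        rw [mul_assoc, ht, Equiv.swap_mul_self, mul_one]
      have hval : (v * t) 1 = -(v 1) := by
        rw [ht, Equiv.Perm.mul_apply, Equiv.swap_apply_left, hv.1]
      have := stat_mul_swapneg n hmem 1 le_rfl (by exact_mod_cast hn) (by omega)
      rw [← ht, heq, AA_one] at this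
      omega
    · omega
    · right
      have := stat_mul_swapneg n hv 1 le_rfl (by exact_mod_cast hn) h
      rw [← ht, AA_one] at this
      omega
  · -- g = s i
    have hi1' : (1:ℤ) ≤ (i:ℤ) := by exact_mod_cast hi1
    have hi2' : (i:ℤ) + 1 ≤ (n:ℤ) := by
      have : i + 1 ≤ n := by omega
      exact_mod_cast this
    have hne : v (i:ℤ) ≠ v ((i:ℤ)+1) := fun h => by
      have := v.injective h; omega
    have := stat_mul_s n hv (i:ℤ) hi1' hi2'
    rcases lt_trichotomy (v (i:ℤ)) (v ((i:ℤ)+1)) with h | h | h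
    · right
      rw [if_neg (by omega), if_pos h] at this
      omega
    · omega
    · left
      rw [if_pos (by omega), if_neg (by omega)] at this
      omega

lemma word_bound {n : ℕ} (hn : 1 ≤ n) :
    ∀ l : List (Equiv.Perm ℤ), (∀ g ∈ l, g ∈ gens n) →
      l.prod ∈ W n ∧ stat n l.prod ≤ l.length := by
  intro l
  induction l using List.reverseRecOn with
  | nil =>
    intro _
    refine ⟨by simpa using one_mem_W n, ?_⟩
    simp [stat_one n]
  | append_singleton l g ih =>
    intro hmem
    have hl : ∀ g' ∈ l, g' ∈ gens n := fun g' hg' => hmem g' (by simp [hg'])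
    obtain ⟨hW, hle⟩ := ih hl
    have hg : g ∈ gens n := hmem g (by simp)
    obtain ⟨hW2, hstep⟩ := stat_step hn hW hg
    rw [List.prod_append, List.prod_singleton] at *
    refine ⟨hW2, ?_⟩
    rw [List.length_append]
    simp only [List.length_singleton]
    omega


lemma s_invol (i : ℤ) (hi : 1 ≤ i) : s i * s i = 1 := by
  ext x
  simp only [Equiv.Perm.mul_apply, Equiv.Perm.one_apply, Equiv.Perm.coe_mul, Function.comp_apply]
  rw [s_apply i x hi]
  split_ifs with h1 h2 h3 h4 <;> rw [s_apply i _ hi] <;> split_ifs <;> omega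

lemma incr_chain {n : ℕ} {w : Equiv.Perm ℤ}
    (h : ∀ i : ℤ, 1 ≤ i → i + 1 ≤ (n:ℤ) → w i < w (i+1)) :
    ∀ p q : ℤ, 1 ≤ p → p < q → q ≤ (n:ℤ) → w p < w q := by
  intro p q hp hpq hq
  have H : ∀ r : ℤ, p + 1 ≤ r → r ≤ (n:ℤ) → w p < w r := by
    intro r hr
    refine Int.le_induction (motive := fun r _ => r ≤ (n:ℤ) → w p < w r) ?_ ?_ r hr
    · intro hle; exact h p hp hle
    · intro r hr2 ih hle
      have h1 : w r < w (r+1) := h r (by omega) (by omega)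
      have h2 : w p < w r := ih (by omega)
      omega
  exact H q (by omega) hq

lemma eq_one_of_incr {n : ℕ} (hn : 1 ≤ n) {w : Equiv.Perm ℤ} (hw : w ∈ W n)
    (hincr : ∀ p q : ℤ, 1 ≤ p → p < q → q ≤ (n:ℤ) → w p < w q) (hpos : 0 < w 1) :
    w = 1 := by
  have claim1 : ∀ k : ℤ, 1 ≤ k → k ≤ (n:ℤ) → 0 < w k := by
    intro k h1 h2
    rcases eq_or_lt_of_le h1 with h | h
    · rw [← h]; exact hpos
    · have := hincr 1 k le_rfl h h2; omega
  have claim2 : ∀ k : ℤ, 1 ≤ k → k ≤ (n:ℤ) → k ≤ w k := by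
    intro k h1
    refine Int.le_induction (motive := fun k _ => k ≤ (n:ℤ) → k ≤ w k) ?_ ?_ k h1
    · intro _; exact hpos
    · intro k hk ih hle
      have h2 := hincr k (k+1) hk (by omega) hle
      have h3 := ih (by omega)
      omega
  have claim3 : ∀ d : ℕ, ∀ k : ℤ, 1 ≤ k → k ≤ (n:ℤ) → (n:ℤ) - d ≤ k → w k ≤ k := by
    intro d
    induction d with
    | zero =>
      intro k h1 h2 h3
      have hk : k = (n:ℤ) := by omega
      rw [hk]
      have := W_abs_le hw (k := (n:ℤ)) (by rcases abs_cases ((n:ℤ)) with ⟨h,_⟩|⟨h,_⟩ <;> omega)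
      rcases abs_cases (w (n:ℤ)) with ⟨h,_⟩|⟨h,_⟩ <;> omega
    | succ d ih =>
      intro k h1 h2 h3
      by_cases hc : (n:ℤ) - d ≤ k
      · exact ih k h1 h2 hc
      · have h4 : k + 1 ≤ (n:ℤ) := by omega
        have h5 := ih (k+1) (by omega) h4 (by omega)
        have h6 := hincr k (k+1) h1 (by omega) h4
        omega
  have claim : ∀ k : ℤ, 1 ≤ k → k ≤ (n:ℤ) → w k = k := by
    intro k h1 h2
    have := claim2 k h1 h2
    have := claim3 n k h1 h2 (by omega)
    omega
  ext x
  simp only [Equiv.Perm.one_apply, Equiv.Perm.coe_one, id_eq]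
  rcases lt_trichotomy x 0 with hx | hx | hx
  · by_cases hxn : -(n:ℤ) ≤ x
    · have h1 : w (-x) = -x := claim (-x) (by omega) (by omega)
      have h2 := hw.1 (-x)
      rw [neg_neg] at h2
      rw [h2, h1, neg_neg]
    · exact hw.2 x (by rcases abs_cases x with ⟨h,_⟩|⟨h,_⟩ <;> omega)
  · rw [hx]; exact W_zero hw
  · by_cases hxn : x ≤ (n:ℤ)
    · exact claim x (by omega) hxn
    · exact hw.2 x (by rcases abs_cases x with ⟨h,_⟩|⟨h,_⟩ <;> omega)

lemma stat_eq_zero_eq_one {n : ℕ} (hn : 1 ≤ n) {w : Equiv.Perm ℤ} (hw : w ∈ W n)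
    (h : stat n w = 0) : w = 1 := by
  have hinv : invF n w = 0 ∧ negsum n w = 0 := by
    unfold stat at h; omega
  have hns : ∀ k : ℤ, 1 ≤ k → k ≤ (n:ℤ) → 0 < w k := by
    intro k h1 h2
    have := hinv.2
    unfold negsum at this
    rw [Finset.sum_eq_zero_iff] at this
    have h3 := this k (mem_II.mpr ⟨h1, h2⟩)
    have h4 : w k ≠ 0 := W_ne_zero hw (by omega)
    omega
  have hnoinv : ∀ p q : ℤ, 1 ≤ p → p < q → q ≤ (n:ℤ) → w p < w q := by
    intro p q h1 h2 h3
    have := hinv.1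
    unfold invF at this
    rw [Finset.sum_eq_zero_iff] at this
    have h4 := this p (mem_II.mpr ⟨h1, by omega⟩)
    rw [Finset.sum_eq_zero_iff] at h4
    have h5 := h4 q (mem_II.mpr ⟨by omega, h3⟩)
    simp only [ite_eq_right_iff, one_ne_zero] at h5
    have h6 : w p ≠ w q := fun hh => by have := w.injective hh; omega
    by_contra hc
    exact h5 ⟨h2, by omega⟩
  exact eq_one_of_incr hn hw hnoinv (hns 1 le_rfl (by omega))

lemma exists_word {n : ℕ} (hn : 1 ≤ n) :
    ∀ N : ℕ, ∀ w : Equiv.Perm ℤ, w ∈ W n → stat n w = N →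
      ∃ l : List (Equiv.Perm ℤ), (∀ g ∈ l, g ∈ gens n) ∧ l.prod = w ∧ l.length = N := by
  intro N
  induction N using Nat.strong_induction_on with
  | _ N ih =>
    intro w hw hstat
    by_cases hdesc : ∃ i : ℤ, 1 ≤ i ∧ i + 1 ≤ (n:ℤ) ∧ w (i+1) < w i
    · obtain ⟨i, hi1, hi2, hlt⟩ := hdesc
      have hs := stat_mul_s n hw i hi1 hi2
      have hne : w i ≠ w (i+1) := fun hh => by have := w.injective hh; omega
      rw [if_pos hlt, if_neg (by omega)] at hs
      have hWu : w * s i ∈ W n := W_mul hw (s_mem_W n i hi1 hi2)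
      obtain ⟨l, hl1, hl2, hl3⟩ := ih (stat n (w * s i)) (by omega) (w * s i) hWu rfl
      refine ⟨l ++ [s i], ?_, ?_, ?_⟩
      · intro g hg
        rcases List.mem_append.mp hg with hml | hml
        · exact hl1 g hml
        · rw [List.mem_singleton] at hml
          rw [hml]
          refine Set.mem_insert_iff.mpr (Or.inr ⟨i.toNat, by omega, by omega, ?_⟩)
          rw [Int.toNat_of_nonneg (by omega)]
      · rw [List.prod_append, List.prod_singleton, hl2, mul_assoc, s_invol i hi1, mul_one]
      · rw [List.length_append, List.length_singleton, hl3]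
        omega
    · push_neg at hdesc
      have hincr : ∀ p q : ℤ, 1 ≤ p → p < q → q ≤ (n:ℤ) → w p < w q := by
        apply incr_chain
        intro i h1 h2
        have := hdesc i h1 h2
        have hne : w i ≠ w (i+1) := fun hh => by have := w.injective hh; omega
        omega
      by_cases hsign : w 1 < 0
      · -- multiply by t
        have htW : t ∈ W n := t_mem_W hn
        have hmem : w * t ∈ W n := W_mul hw htW
        have ht : t = Equiv.swap (1:ℤ) (-1) := rfl
        have heq : (w * t) * t = w := by
          rw [mul_assoc, ht, Equiv.swap_mul_self, mul_one]
        have hval : (w * t) 1 = -(w 1) := by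
          rw [ht, Equiv.Perm.mul_apply, Equiv.swap_apply_left, hw.1]
        have hstep := stat_mul_swapneg n hmem 1 le_rfl (by exact_mod_cast hn) (by omega)
        rw [← ht, heq, AA_one] at hstep
        obtain ⟨l, hl1, hl2, hl3⟩ := ih (stat n (w * t)) (by omega) (w * t) hmem rfl
        refine ⟨l ++ [t], ?_, ?_, ?_⟩
        · intro g hg
          rcases List.mem_append.mp hg with hml | hml
          · exact hl1 g hml
          · rw [List.mem_singleton] at hml
            rw [hml]
            exact Set.mem_insert _ _
        · rw [List.prod_append, List.prod_singleton, hl2, heq]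
        · rw [List.length_append, List.length_singleton, hl3]
          omega
      · -- w = 1
        have hpos : 0 < w 1 := by
          have := W_ne_zero hw (n := n) (k := 1) one_ne_zero
          omega
        have h1 : w = 1 := eq_one_of_incr hn hw hincr hpos
        have h0 : stat n w = 0 := by rw [h1]; exact stat_one n
        refine ⟨[], by simp, by rw [List.prod_nil, h1], by rw [List.length_nil]; omega⟩

lemma len_eq_stat {n : ℕ} (hn : 1 ≤ n) {w : Equiv.Perm ℤ} (hw : w ∈ W n) :
    len n w = stat n w := by
  obtain ⟨l, hl1, hl2, hl3⟩ := exists_word hn (stat n w) w hw rfl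
  unfold len
  apply le_antisymm
  · exact Nat.sInf_le ⟨l, hl3, hl1, hl2⟩
  · have hne : {k | ∃ l : List (Equiv.Perm ℤ),
        l.length = k ∧ (∀ g ∈ l, g ∈ gens n) ∧ l.prod = w}.Nonempty :=
      ⟨stat n w, l, hl3, hl1, hl2⟩
    apply le_csInf hne
    rintro k ⟨l', hlen, hmemg, hprod⟩
    have hb := (word_bound hn l' hmemg).2
    rw [hprod] at hb
    omega

lemma len_swapneg_lt_iff {n : ℕ} (hn : 1 ≤ n) {w : Equiv.Perm ℤ} (hw : w ∈ W n)
    {j : ℤ} (hj1 : 1 ≤ j) (hjn : j ≤ (n:ℤ)) :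
    len n (w * Equiv.swap j (-j)) < len n w ↔ w j < 0 := by
  have hmem : w * Equiv.swap j (-j) ∈ W n := W_mul hw (swapneg_mem_W n j hj1 hjn)
  rw [len_eq_stat hn hmem, len_eq_stat hn hw]
  have hne : w j ≠ 0 := W_ne_zero hw (by omega)
  rcases lt_trichotomy (w j) 0 with h | h | h
  · have heq : (w * Equiv.swap j (-j)) * Equiv.swap j (-j) = w := by
      rw [mul_assoc, Equiv.swap_mul_self, mul_one]
    have hval : (w * Equiv.swap j (-j)) j = -(w j) := by
      rw [Equiv.Perm.mul_apply, Equiv.swap_apply_left, hw.1]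
    have hstep := stat_mul_swapneg n hmem j hj1 hjn (by omega)
    rw [heq] at hstep
    constructor
    · intro _; exact h
    · intro _; omega
  · omega
  · have hstep := stat_mul_swapneg n hw j hj1 hjn h
    constructor
    · intro hh; omega
    · intro hh; omega

lemma len_s_lt_iff {n : ℕ} (hn : 1 ≤ n) {w : Equiv.Perm ℤ} (hw : w ∈ W n)
    {i : ℤ} (h1 : 1 ≤ i) (h2 : i + 1 ≤ (n:ℤ)) :
    len n (w * s i) < len n w ↔ w (i+1) < w i := by
  have hmem : w * s i ∈ W n := W_mul hw (s_mem_W n i h1 h2)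
  rw [len_eq_stat hn hmem, len_eq_stat hn hw]
  have hne : w i ≠ w (i+1) := fun hh => by have := w.injective hh; omega
  have hs := stat_mul_s n hw i h1 h2
  rcases lt_trichotomy (w (i+1)) (w i) with h | h | h
  · rw [if_pos h, if_neg (by omega)] at hs
    constructor <;> intro <;> omega
  · omega
  · rw [if_neg (by omega), if_pos (by omega)] at hs
    constructor <;> intro <;> omega


lemma coeM_eq (l : List ℕ) : (do let a ← l; pure ((a:ℤ)) : List ℤ) = l.map Int.ofNat := by
  induction l with
  | nil => rfl
  | cons x xs ih =>
    show List.flatMap _ (x :: xs) = _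
    rw [List.flatMap_cons, List.map_cons, ← ih]
    rfl

lemma desc_norm (k : ℕ) :
    desc 1 k = ((List.range k).map (fun m : ℕ => s ((k:ℤ) - (m:ℤ)))).prod := by
  unfold desc
  rw [Nat.add_sub_cancel, coeM_eq, List.map_map]
  rfl

lemma desc_zero : desc 1 0 = 1 := by
  rw [desc_norm]
  simp

lemma desc_one_succ (k : ℕ) : desc 1 (k+1) = s ((k:ℤ)+1) * desc 1 k := by
  rw [desc_norm, desc_norm, List.range_succ_eq_map, List.map_cons, List.prod_cons, List.map_map]
  have hfun : ((fun m : ℕ => s (((k+1:ℕ):ℤ) - (m:ℤ))) ∘ Nat.succ)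
      = (fun m : ℕ => s ((k:ℤ) - (m:ℤ))) := by
    funext m
    simp only [Function.comp_apply]
    congr 1
    push_cast
    ring
  rw [hfun]
  norm_num

lemma desc_apply_one (k : ℕ) : desc 1 k 1 = (k:ℤ)+1 ∧ desc 1 k (-1) = -((k:ℤ)+1) := by
  induction k with
  | zero => rw [desc_zero]; simp
  | succ k ih =>
    rw [desc_one_succ]
    constructor
    · rw [Equiv.Perm.mul_apply, ih.1, s_apply _ _ (by omega)]
      push_cast
      split_ifs <;> omega
    · rw [Equiv.Perm.mul_apply, ih.2, s_apply _ _ (by omega)]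
      push_cast
      split_ifs <;> omega

lemma tt_eq (j : ℕ) (hj : 1 ≤ j) : tt j = Equiv.swap (j:ℤ) (-(j:ℤ)) := by
  unfold tt
  have h := Equiv.swap_apply_apply (desc 1 (j-1)) (1:ℤ) (-1)
  have ht : t = Equiv.swap (1:ℤ) (-1) := rfl
  rw [ht, ← h, (desc_apply_one (j-1)).1, (desc_apply_one (j-1)).2]
  have h2 : ((j-1:ℕ):ℤ) + 1 = (j:ℤ) := by omega
  rw [h2]

lemma tt_one : tt 1 = t := by
  rw [tt_eq 1 le_rfl]
  norm_num
  rfl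

lemma tt_apply (j : ℕ) (hj : 1 ≤ j) (x : ℤ) :
    tt j x = if x = (j:ℤ) then -(j:ℤ) else if x = -(j:ℤ) then (j:ℤ) else x := by
  rw [tt_eq j hj]
  exact swapneg_apply _ _

lemma tt_ne_t {j : ℕ} (hj : 2 ≤ j) : tt j ≠ t := by
  intro h
  have h1 : tt j 1 = 1 := by
    rw [tt_apply j (by omega), if_neg (by omega), if_neg (by omega)]
  have h2 : t 1 = -1 := Equiv.swap_apply_left _ _
  rw [h, h2] at h1
  omega

lemma tt_not_s {j : ℕ} (hj : 1 ≤ j) (i : ℕ) (hi : 1 ≤ i) : tt j ≠ s (i:ℤ) := by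
  intro h
  have h1 : tt j (j:ℤ) = -(j:ℤ) := by
    rw [tt_apply j hj, if_pos rfl]
  rw [h, s_apply (i:ℤ) (j:ℤ) (by exact_mod_cast hi)] at h1
  revert h1
  split_ifs <;> omega

lemma len_tt_lt_iff {n : ℕ} (hn : 1 ≤ n) {w : Equiv.Perm ℤ} (hw : w ∈ W n)
    {j : ℕ} (hj1 : 1 ≤ j) (hjn : j ≤ n) :
    len n (w * tt j) < len n w ↔ w (j:ℤ) < 0 := by
  rw [tt_eq j hj1]
  exact len_swapneg_lt_iff hn hw (by exact_mod_cast hj1) (by exact_mod_cast hjn)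





lemma area_pos_iff {n : ℕ} {y : Equiv.Perm ℤ} (hy : y ∈ Area n) {i : ℤ}
    (h1 : 1 ≤ i) (h2 : i + 1 ≤ (n:ℤ)) :
    y (i+1) < y i ↔ 0 < y i := by
  obtain ⟨hyW, hA⟩ := hy
  have h3 := hA i (i+1) h1 (by omega) h2
  have hne0 : y i ≠ 0 := W_ne_zero hyW (by omega)
  have hne0' : y (i+1) ≠ 0 := W_ne_zero hyW (by omega)
  constructor
  · intro h
    rcases lt_trichotomy (y i) 0 with hc | hc | hc
    · rcases lt_trichotomy (y (i+1)) 0 with hd | hd | hd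
      · have := h3.1 hc hd; omega
      · omega
      · omega
    · omega
    · exact hc
  · intro h
    rcases lt_trichotomy (y (i+1)) 0 with hd | hd | hd
    · omega
    · omega
    · exact h3.2 h hd

lemma aux_forward (n m : ℕ) (hn : 2 ≤ n) (y w : Equiv.Perm ℤ)
    (h : rho n m y = rho n m w) :
    {j : ℕ | 1 ≤ j ∧ j ≤ m ∧ len n (y * tt j) < len n y}
      ⊆ {j : ℕ | 1 ≤ j ∧ j ≤ m ∧ len n (w * tt j) < len n w} := by
  rintro j ⟨hj1, hjm, hlt⟩
  refine ⟨hj1, hjm, ?_⟩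
  by_cases hj2 : 2 ≤ j
  · have hmem : tt j ∈ rho n m y := Or.inr ⟨j, hj2, hjm, rfl, hlt⟩
    rw [h] at hmem
    rcases hmem with ⟨hg, hlen⟩ | ⟨j', h2', hj'm, heq, hlen⟩
    · exfalso
      rcases hg with hg | ⟨i, hi1, _, hgi⟩
      · exact tt_ne_t hj2 hg
      · exact tt_not_s (by omega) i hi1 hgi
    · rw [heq]
      exact hlen
  · have hj : j = 1 := by omega
    subst hj
    have hmem : t ∈ rho n m y := Or.inl ⟨Set.mem_insert _ _, by rw [← tt_one]; exact hlt⟩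
    rw [h] at hmem
    rcases hmem with ⟨_, hlen⟩ | ⟨j', h2', _, heq, hlen⟩
    · rw [tt_one]
      exact hlen
    · exact absurd heq.symm (tt_ne_t h2')

lemma aux_backward (n m : ℕ) (hn : 2 ≤ n) (hm : m = n - 1 ∨ m = n)
    (y w : Equiv.Perm ℤ) (hy : y ∈ Area n) (hw : w ∈ Area n)
    (h : {j : ℕ | 1 ≤ j ∧ j ≤ m ∧ len n (y * tt j) < len n y}
      = {j : ℕ | 1 ≤ j ∧ j ≤ m ∧ len n (w * tt j) < len n w}) :
    rho n m y ⊆ rho n m w := by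
  have hn1 : 1 ≤ n := by omega
  have hm1 : 1 ≤ m ∧ n - 1 ≤ m ∧ m ≤ n := by rcases hm with rfl | rfl <;> omega
  have hyW := hy.1
  have hwW := hw.1
  rintro g (⟨hgens, hlen⟩ | ⟨j, hj2, hjm, rfl, hlen⟩)
  · rcases hgens with hg | ⟨i, hi1, hi2, hgi⟩
    · -- g = t
      subst hg
      have h1 : (1:ℕ) ∈ {j : ℕ | 1 ≤ j ∧ j ≤ m ∧ len n (y * tt j) < len n y} :=
        ⟨le_rfl, by omega, by rw [tt_one]; exact hlen⟩
      rw [h] at h1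
      left
      refine ⟨Set.mem_insert _ _, ?_⟩
      rw [← tt_one]
      exact h1.2.2
    · -- g = s i
      subst hgi
      have hi1' : (1:ℤ) ≤ (i:ℤ) := by exact_mod_cast hi1
      have hi2' : (i:ℤ) + 1 ≤ (n:ℤ) := by
        have : i + 1 ≤ n := by omega
        exact_mod_cast this
      have hdes : y ((i:ℤ)+1) < y (i:ℤ) := (len_s_lt_iff hn1 hyW hi1' hi2').mp hlen
      have hypos : 0 < y (i:ℤ) := (area_pos_iff hy hi1' hi2').mp hdes
      have hnm : i ∉ {j : ℕ | 1 ≤ j ∧ j ≤ m ∧ len n (y * tt j) < len n y} := by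
        rintro ⟨_, _, hl⟩
        have := (len_tt_lt_iff hn1 hyW hi1 (by omega)).mp hl
        omega
      rw [h] at hnm
      have hwpos : 0 < w (i:ℤ) := by
        have hne : w (i:ℤ) ≠ 0 := W_ne_zero hwW (by omega)
        by_contra hc
        push_neg at hc
        exact hnm ⟨hi1, by omega, (len_tt_lt_iff hn1 hwW hi1 (by omega)).mpr (by omega)⟩
      have hwdes : w ((i:ℤ)+1) < w (i:ℤ) := (area_pos_iff hw hi1' hi2').mpr hwpos
      left
      exact ⟨Set.mem_insert_iff.mpr (Or.inr ⟨i, hi1, hi2, rfl⟩),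
        (len_s_lt_iff hn1 hwW hi1' hi2').mpr hwdes⟩
  · -- tt j part
    have h1 : j ∈ {j : ℕ | 1 ≤ j ∧ j ≤ m ∧ len n (y * tt j) < len n y} :=
      ⟨by omega, hjm, hlen⟩
    rw [h] at h1
    exact Or.inr ⟨j, hj2, hjm, rfl, h1.2.2⟩

theorem statement8 (n m : ℕ) (hn : 2 ≤ n) (hm : m = n - 1 ∨ m = n)
    (y w : Equiv.Perm ℤ) (hy : y ∈ Area n) (hw : w ∈ Area n) :
    rho n m y = rho n m w ↔
      {j : ℕ | 1 ≤ j ∧ j ≤ m ∧ len n (y * tt j) < len n y}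
        = {j : ℕ | 1 ≤ j ∧ j ≤ m ∧ len n (w * tt j) < len n w} := by
  constructor
  · intro h
    exact Set.Subset.antisymm (aux_forward n m hn y w h) (aux_forward n m hn w y h.symm)
  · intro h
    exact Set.Subset.antisymm (aux_backward n m hn hm y w hy hw h)
      (aux_backward n m hn hm w y hw hy h.symm)


end BnPaper
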